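/- Let V and W be the spaces of real m×n and p×q matrices equipped with the Frobenius inner product, let L : V → W be a linear map, and let F : V → ℝ and G : W → ℝ be convex functions. For β ≥ 0 define the augmented Lagrangian L_β(X,Y,Z) = F(X) + G(Y) + ⟨L(X) − Y, Z⟩_F + (β/2)‖L(X) − Y‖_F². Then (X*,Y*,Z*) is a saddle point of L_0 (i.e. L_0(X*,Y*,Z) ≤ L_0(X*,Y*,Z*) ≤ L_0(X,Y,Z*) for all X ∈ V, Y ∈ W, Z ∈ W) if and only if (X*,Y*,Z*) is a saddle point of L_β for every β > 0. -/

import Mathlib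

open Matrix

/-- Frobenius inner product on real matrices. -/
noncomputable def fip {m n : ℕ} (A B : Matrix (Fin m) (Fin n) ℝ) : ℝ :=
  (Aᵀ * B).trace

/-- Frobenius norm on real matrices. -/
noncomputable def fnorm {m n : ℕ} (A : Matrix (Fin m) (Fin n) ℝ) : ℝ :=
  Real.sqrt (fip A A)

/-- The augmented Lagrangian `L_β(X,Y,Z)`. -/
noncomputable def aug {m n p q : ℕ}
    (L : Matrix (Fin m) (Fin n) ℝ →ₗ[ℝ] Matrix (Fin p) (Fin q) ℝ)
    (F : Matrix (Fin m) (Fin n) ℝ → ℝ) (G : Matrix (Fin p) (Fin q) ℝ → ℝ)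
    (β : ℝ) (X : Matrix (Fin m) (Fin n) ℝ) (Y Z : Matrix (Fin p) (Fin q) ℝ) : ℝ :=
  F X + G Y + fip (L X - Y) Z + β / 2 * (fnorm (L X - Y)) ^ 2

/-- Saddle point of a function of primal variables `(X,Y)` and dual variable `Z`. -/
def IsSaddle {m n p q : ℕ}
    (Φ : Matrix (Fin m) (Fin n) ℝ → Matrix (Fin p) (Fin q) ℝ → Matrix (Fin p) (Fin q) ℝ → ℝ)
    (Xs : Matrix (Fin m) (Fin n) ℝ) (Ys Zs : Matrix (Fin p) (Fin q) ℝ) : Prop :=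
  ∀ X Y Z, Φ Xs Ys Z ≤ Φ Xs Ys Zs ∧ Φ Xs Ys Zs ≤ Φ X Y Zs

lemma fip_eq {m n : ℕ} (A B : Matrix (Fin m) (Fin n) ℝ) :
    fip A B = ∑ j, ∑ i, A i j * B i j := by
  simp [fip, Matrix.trace, Matrix.mul_apply, Matrix.diag, Matrix.transpose_apply]

lemma fip_self_nonneg {m n : ℕ} (A : Matrix (Fin m) (Fin n) ℝ) : 0 ≤ fip A A := by
  rw [fip_eq]
  exact Finset.sum_nonneg fun j _ => Finset.sum_nonneg fun i _ => mul_self_nonneg _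

lemma fip_add_right {m n : ℕ} (A B C : Matrix (Fin m) (Fin n) ℝ) :
    fip A (B + C) = fip A B + fip A C := by
  simp [fip_eq, Matrix.add_apply, mul_add, Finset.sum_add_distrib]

lemma fip_self_eq_zero {m n : ℕ} {A : Matrix (Fin m) (Fin n) ℝ} (h : fip A A = 0) :
    A = 0 := by
  rw [fip_eq] at h
  ext i j
  have h1 := (Finset.sum_eq_zero_iff_of_nonneg (fun j _ => Finset.sum_nonneg fun i _ => mul_self_nonneg _)).mp h j
    (Finset.mem_univ j)
  have h2 := (Finset.sum_eq_zero_iff_of_nonneg (fun i _ => mul_self_nonneg _)).mp h1 i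
    (Finset.mem_univ i)
  simpa [mul_self_eq_zero] using h2

lemma fnorm_sq {m n : ℕ} (A : Matrix (Fin m) (Fin n) ℝ) : fnorm A ^ 2 = fip A A :=
  Real.sq_sqrt (fip_self_nonneg A)

lemma saddle_feas {m n p q : ℕ}
    (L : Matrix (Fin m) (Fin n) ℝ →ₗ[ℝ] Matrix (Fin p) (Fin q) ℝ)
    (F : Matrix (Fin m) (Fin n) ℝ → ℝ) (G : Matrix (Fin p) (Fin q) ℝ → ℝ)
    (β : ℝ) (Xs : Matrix (Fin m) (Fin n) ℝ) (Ys Zs : Matrix (Fin p) (Fin q) ℝ)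
    (h : IsSaddle (aug L F G β) Xs Ys Zs) : L Xs - Ys = 0 := by
  set D := L Xs - Ys with hD
  have h1 := (h Xs Ys (Zs + D)).1
  unfold aug at h1
  rw [← hD, fip_add_right] at h1
  have hDD : fip D D ≤ 0 := by linarith
  exact fip_self_eq_zero (le_antisymm hDD (fip_self_nonneg D))

theorem stmt0 {m n p q : ℕ}
    (L : Matrix (Fin m) (Fin n) ℝ →ₗ[ℝ] Matrix (Fin p) (Fin q) ℝ)
    (F : Matrix (Fin m) (Fin n) ℝ → ℝ) (G : Matrix (Fin p) (Fin q) ℝ → ℝ)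
    (hF : ConvexOn ℝ Set.univ F) (hG : ConvexOn ℝ Set.univ G)
    (Xs : Matrix (Fin m) (Fin n) ℝ) (Ys Zs : Matrix (Fin p) (Fin q) ℝ) :
    IsSaddle (aug L F G 0) Xs Ys Zs ↔ ∀ β > 0, IsSaddle (aug L F G β) Xs Ys Zs := by
  have fip_zero : ∀ (Z : Matrix (Fin p) (Fin q) ℝ),
      fip (0 : Matrix (Fin p) (Fin q) ℝ) Z = 0 := by
    intro Z; simp [fip_eq]
  have fnorm_zero : fnorm (0 : Matrix (Fin p) (Fin q) ℝ) = 0 := by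
    simp [fnorm, fip_eq]
  constructor
  · intro h0 β hβ
    have hD := saddle_feas L F G 0 Xs Ys Zs h0
    intro X Y Z
    have hconst : ∀ (Z' : Matrix (Fin p) (Fin q) ℝ) (β' : ℝ),
        aug L F G β' Xs Ys Z' = F Xs + G Ys := by
      intro Z' β'; unfold aug; rw [hD, fip_zero, fnorm_zero]; ring
    constructor
    · rw [hconst, hconst]
    · rw [hconst]
      have h2 := (h0 X Y Z).2
      rw [hconst] at h2
      have hpen : 0 ≤ β / 2 * (fnorm (L X - Y)) ^ 2 := by
        have := fip_self_nonneg (L X - Y)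
        rw [← fnorm_sq] at this
        positivity
      unfold aug at h2 ⊢
      linarith [h2]
  · intro hb
    have h1 := hb 1 one_pos
    have hD := saddle_feas L F G 1 Xs Ys Zs h1
    have hconst : ∀ (Z' : Matrix (Fin p) (Fin q) ℝ) (β' : ℝ),
        aug L F G β' Xs Ys Z' = F Xs + G Ys := by
      intro Z' β'; unfold aug; rw [hD, fip_zero, fnorm_zero]; ring
    intro X Y Z
    constructor
    · rw [hconst, hconst]
    · rw [hconst]
      set d := (fnorm (L X - Y)) ^ 2 with hd
      have hdnn : 0 ≤ d := by rw [hd, fnorm_sq]; exact fip_self_nonneg _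
      set c := F X + G Y + fip (L X - Y) Zs with hc
      have hkey : ∀ β > (0 : ℝ), F Xs + G Ys ≤ c + β / 2 * d := by
        intro β hβ
        have h2 := ((hb β hβ) X Y Zs).2
        rw [hconst] at h2
        unfold aug at h2
        rw [← hd, ← hc] at h2
        exact h2
      have : F Xs + G Ys ≤ c := by
        by_contra hlt
        push_neg at hlt
        rcases eq_or_lt_of_le hdnn with hd0 | hdpos
        · have := hkey 1 one_pos
          rw [← hd0] at this
          linarith
        · have hβpos : (0 : ℝ) < (F Xs + G Ys - c) / d := div_pos (by linarith) hdpos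
          have := hkey _ hβpos
          have hE : ((F Xs + G Ys - c) / d) / 2 * d = (F Xs + G Ys - c) / 2 := by
            field_simp
          rw [hE] at this
          linarith
      unfold aug
      linarith
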